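/- Let V and W be oriented two-dimensional subspaces of ℝ⁴ with principal angles θ₁, θ₂, and let θ⊥ be the angle between V and W⊥ (defined via the inner product of the representing unit bivectors, with W⊥ oriented so that a positive basis of W followed by a positive basis of W⊥ is positively oriented in ℝ⁴). Then |cos θ⊥| = sin θ₁ · sin θ₂. -/

import Mathlib

noncomputable section
open Real
open scoped RealInnerProductSpace

abbrev E4 := EuclideanSpace ℝ (Fin 4)

/-- `θ₁ ≤ θ₂` are the principal angles between the planes `V` and `W` of `ℝ⁴`:
`cos²θ₁`, `cos²θ₂` are the eigenvalues of the quadratic form `v ↦ ‖p_W v‖²` on `V`. -/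
def IsPrincipalAngles (V W : Submodule ℝ E4) (θ₁ θ₂ : ℝ) : Prop :=
  0 ≤ θ₁ ∧ θ₁ ≤ θ₂ ∧ θ₂ ≤ π / 2 ∧
  ∃ v₁ v₂ : E4, v₁ ∈ V ∧ v₂ ∈ V ∧ ‖v₁‖ = 1 ∧ ‖v₂‖ = 1 ∧ ⟪v₁, v₂⟫ = 0 ∧
    ∀ v ∈ V, ‖(W.orthogonalProjectionOnto v : E4)‖ ^ 2 =
      Real.cos θ₁ ^ 2 * ⟪v, v₁⟫ ^ 2 + Real.cos θ₂ ^ 2 * ⟪v, v₂⟫ ^ 2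

/-- Two orthonormal vectors in a 2-dimensional subspace span it. -/
lemma span_eq_of_orthonormal_pair (K : Submodule ℝ E4) (hK : Module.finrank ℝ K = 2)
    (u₁ u₂ : E4) (hu₁K : u₁ ∈ K) (hu₂K : u₂ ∈ K)
    (hu₁ : ‖u₁‖ = 1) (hu₂ : ‖u₂‖ = 1) (hu : ⟪u₁, u₂⟫ = 0) :
    K = Submodule.span ℝ {u₁, u₂} := by
  have h11 : ⟪u₁, u₁⟫ = 1 := by rw [real_inner_self_eq_norm_sq, hu₁]; norm_num
  have h22 : ⟪u₂, u₂⟫ = 1 := by rw [real_inner_self_eq_norm_sq, hu₂]; norm_num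
  have h21 : ⟪u₂, u₁⟫ = 0 := by rw [real_inner_comm]; exact hu
  have hon : Orthonormal ℝ ![u₁, u₂] := by
    rw [orthonormal_iff_ite]
    intro i j
    fin_cases i <;> fin_cases j <;>
      simp only [Fin.mk_zero, Fin.mk_one, Matrix.cons_val_zero, Matrix.cons_val_one,
        Matrix.head_cons, Fin.zero_eq_one_iff, Nat.succ_ne_self, reduceIte] <;>
      assumption
  have hli := hon.linearIndependent
  have hrange : Set.range ![u₁, u₂] = {u₁, u₂} := by
    simp only [Matrix.range_cons, Matrix.range_empty, Set.union_empty, Set.union_singleton]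
    rw [Set.pair_comm]
  have hle : Submodule.span ℝ {u₁, u₂} ≤ K := by
    rw [Submodule.span_le]
    rintro x (rfl | rfl) <;> assumption
  have hfr : Module.finrank ℝ (Submodule.span ℝ {u₁, u₂}) = 2 := by
    rw [← hrange, finrank_span_eq_card hli]
    simp
  exact (Submodule.eq_of_le_of_finrank_eq hle (by rw [hfr, hK])).symm

/-- Coordinates with respect to an orthonormal basis of a 2-dimensional subspace. -/
lemma eq_coord_of_mem (K : Submodule ℝ E4) (u₁ u₂ : E4)
    (hu₁ : ‖u₁‖ = 1) (hu₂ : ‖u₂‖ = 1) (hu : ⟪u₁, u₂⟫ = 0)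
    (hKspan : K = Submodule.span ℝ {u₁, u₂}) (v : E4) (hvK : v ∈ K) :
    v = ⟪v, u₁⟫ • u₁ + ⟪v, u₂⟫ • u₂ := by
  rw [hKspan] at hvK
  obtain ⟨a, b, hab⟩ := Submodule.mem_span_pair.mp hvK
  have h11 : ⟪u₁, u₁⟫ = 1 := by rw [real_inner_self_eq_norm_sq, hu₁]; norm_num
  have h22 : ⟪u₂, u₂⟫ = 1 := by rw [real_inner_self_eq_norm_sq, hu₂]; norm_num
  have h21 : ⟪u₂, u₁⟫ = 0 := by rw [real_inner_comm]; exact hu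
  have h1 : ⟪v, u₁⟫ = a := by
    rw [← hab]
    simp only [inner_add_left, real_inner_smul_left, h11, h21]
    ring
  have h2 : ⟪v, u₂⟫ = b := by
    rw [← hab]
    simp only [inner_add_left, real_inner_smul_left, h22, hu]
    ring
  rw [h1, h2, hab]

lemma norm_sq_coord (u₁ u₂ : E4)
    (hu₁ : ‖u₁‖ = 1) (hu₂ : ‖u₂‖ = 1) (hu : ⟪u₁, u₂⟫ = 0) (a b : ℝ) :
    ‖a • u₁ + b • u₂‖ ^ 2 = a ^ 2 + b ^ 2 := by
  have h11 : ⟪u₁, u₁⟫ = 1 := by rw [real_inner_self_eq_norm_sq, hu₁]; norm_num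
  have h22 : ⟪u₂, u₂⟫ = 1 := by rw [real_inner_self_eq_norm_sq, hu₂]; norm_num
  have h21 : ⟪u₂, u₁⟫ = 0 := by rw [real_inner_comm]; exact hu
  rw [← real_inner_self_eq_norm_sq]
  simp only [inner_add_left, inner_add_right, real_inner_smul_left, real_inner_smul_right,
    h11, h22, h21, hu]
  ring

set_option maxHeartbeats 1000000 in
/-- If `θ₁, θ₂` are the principal angles between the planes `V` and `W`, and `θ⊥` is the
angle between `V` and `Wᗮ` defined via the inner product of representing unit bivectors,
`cos θ⊥ = ⟪v₁ ∧ v₂, w₁' ∧ w₂'⟫` for orthonormal bases `(v₁,v₂)` of `V` and `(w₁',w₂')`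
of `Wᗮ` (any orientation: the absolute value is orientation-independent), then
`|cos θ⊥| = sin θ₁ · sin θ₂`. -/
theorem abs_cos_angle_perp_eq_prod_sin_principal_angles
    (V W : Submodule ℝ E4) (hV : Module.finrank ℝ V = 2) (hW : Module.finrank ℝ W = 2)
    (θ₁ θ₂ : ℝ) (h : IsPrincipalAngles V W θ₁ θ₂)
    (v₁ v₂ w₁' w₂' : E4)
    (hv₁ : ‖v₁‖ = 1) (hv₂ : ‖v₂‖ = 1) (hv : ⟪v₁, v₂⟫ = 0)
    (hVspan : V = Submodule.span ℝ {v₁, v₂})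
    (hw₁ : ‖w₁'‖ = 1) (hw₂ : ‖w₂'‖ = 1) (hw : ⟪w₁', w₂'⟫ = 0)
    (hWspan : Wᗮ = Submodule.span ℝ {w₁', w₂'}) :
    |⟪v₁, w₁'⟫ * ⟪v₂, w₂'⟫ - ⟪v₂, w₁'⟫ * ⟪v₁, w₂'⟫| = Real.sin θ₁ * Real.sin θ₂ := by
  obtain ⟨hθ₁0, hθ12, hθ₂, u₁, u₂, hu₁V, hu₂V, hu₁, hu₂, hu, hformula⟩ := h
  -- projection onto Wᗮ
  have hproj : ∀ x : E4, (Wᗮ.orthogonalProjectionOnto x : E4) = ⟪x, w₁'⟫ • w₁' + ⟪x, w₂'⟫ • w₂' := by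
    intro x
    apply Submodule.eq_starProjection_of_mem_of_inner_eq_zero (K := Wᗮ)
    · rw [hWspan]
      exact Submodule.mem_span_pair.mpr ⟨_, _, rfl⟩
    · intro w hwmem
      rw [hWspan] at hwmem
      obtain ⟨a, b, rfl⟩ := Submodule.mem_span_pair.mp hwmem
      have h11 : ⟪w₁', w₁'⟫ = 1 := by rw [real_inner_self_eq_norm_sq, hw₁]; norm_num
      have h22 : ⟪w₂', w₂'⟫ = 1 := by rw [real_inner_self_eq_norm_sq, hw₂]; norm_num
      have h21 : ⟪w₂', w₁'⟫ = 0 := by rw [real_inner_comm]; exact hw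
      simp only [inner_sub_left, inner_add_left, inner_add_right, real_inner_smul_left,
        real_inner_smul_right, h11, h22, h21, hw]
      ring
  -- key identity for v ∈ V
  have key : ∀ v ∈ V, ⟪v, w₁'⟫ ^ 2 + ⟪v, w₂'⟫ ^ 2 =
      Real.sin θ₁ ^ 2 * ⟪v, u₁⟫ ^ 2 + Real.sin θ₂ ^ 2 * ⟪v, u₂⟫ ^ 2 := by
    intro v hvV
    have hpyth := Submodule.norm_sq_eq_add_norm_sq_projection v W
    have hperp : ‖(Wᗮ.orthogonalProjectionOnto v : E4)‖ ^ 2 = ⟪v, w₁'⟫ ^ 2 + ⟪v, w₂'⟫ ^ 2 := by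
      rw [hproj v]; exact norm_sq_coord _ _ hw₁ hw₂ hw _ _
    have hnv : ‖v‖ ^ 2 = ⟪v, u₁⟫ ^ 2 + ⟪v, u₂⟫ ^ 2 := by
      have huspan : V = Submodule.span ℝ {u₁, u₂} :=
        span_eq_of_orthonormal_pair V hV u₁ u₂ hu₁V hu₂V hu₁ hu₂ hu
      conv_lhs => rw [eq_coord_of_mem V u₁ u₂ hu₁ hu₂ hu huspan v hvV]
      exact norm_sq_coord _ _ hu₁ hu₂ hu _ _
    have hW' := hformula v hvV
    have hs1 : Real.sin θ₁ ^ 2 = 1 - Real.cos θ₁ ^ 2 := by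
      rw [Real.sin_sq]
    have hs2 : Real.sin θ₂ ^ 2 = 1 - Real.cos θ₂ ^ 2 := by
      rw [Real.sin_sq]
    have hc : ‖(W.orthogonalProjectionOnto v : E4)‖ = ‖W.orthogonalProjectionOnto v‖ := rfl
    have hc' : ‖(Wᗮ.orthogonalProjectionOnto v : E4)‖ = ‖Wᗮ.orthogonalProjectionOnto v‖ := rfl
    rw [hc'] at hperp
    rw [hc] at hW'
    rw [hs1, hs2]
    linarith [hpyth, hperp, hnv, hW']
  -- coordinates of v₁, v₂ in the u basis
  set p := ⟪v₁, u₁⟫ with hp_def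
  set q := ⟪v₁, u₂⟫ with hq_def
  set r := ⟪v₂, u₁⟫ with hr_def
  set s := ⟪v₂, u₂⟫ with hs_def
  have hv₁V : v₁ ∈ V := by
    rw [hVspan]; exact Submodule.subset_span (by simp)
  have hv₂V : v₂ ∈ V := by
    rw [hVspan]; exact Submodule.subset_span (by simp)
  have huspan : V = Submodule.span ℝ {u₁, u₂} :=
    span_eq_of_orthonormal_pair V hV u₁ u₂ hu₁V hu₂V hu₁ hu₂ hu
  have hv₁c := eq_coord_of_mem V u₁ u₂ hu₁ hu₂ hu huspan v₁ hv₁V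
  have hv₂c := eq_coord_of_mem V u₁ u₂ hu₁ hu₂ hu huspan v₂ hv₂V
  have hpq : p ^ 2 + q ^ 2 = 1 := by
    have := norm_sq_coord u₁ u₂ hu₁ hu₂ hu p q
    rw [← hv₁c, hv₁] at this
    linarith [this]
  have hrs : r ^ 2 + s ^ 2 = 1 := by
    have := norm_sq_coord u₁ u₂ hu₁ hu₂ hu r s
    rw [← hv₂c, hv₂] at this
    linarith [this]
  have hortho : p * r + q * s = 0 := by
    have : ⟪v₁, v₂⟫ = p * r + q * s := by
      conv_lhs => rw [hv₂c]
      simp only [inner_add_right, real_inner_smul_right]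
      rw [← hr_def, ← hs_def]; ring
    rw [hv] at this
    linarith [this]
  -- the three equations
  set a := ⟪v₁, w₁'⟫
  set b := ⟪v₁, w₂'⟫
  set c := ⟪v₂, w₁'⟫
  set d := ⟪v₂, w₂'⟫
  set s₁ := Real.sin θ₁
  set s₂ := Real.sin θ₂
  have e1 : a ^ 2 + b ^ 2 = s₁ ^ 2 * p ^ 2 + s₂ ^ 2 * q ^ 2 := key v₁ hv₁V
  have e2 : c ^ 2 + d ^ 2 = s₁ ^ 2 * r ^ 2 + s₂ ^ 2 * s ^ 2 := key v₂ hv₂V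
  have e3 : a * c + b * d = s₁ ^ 2 * (p * r) + s₂ ^ 2 * (q * s) := by
    have hsum := key (v₁ + v₂) (V.add_mem hv₁V hv₂V)
    simp only [inner_add_left] at hsum
    linarith [e1, e2, hsum]
  have hsq : (a * d - c * b) ^ 2 = (s₁ * s₂) ^ 2 := by
    linear_combination (c ^ 2 + d ^ 2) * e1 + (s₁ ^ 2 * p ^ 2 + s₂ ^ 2 * q ^ 2) * e2 -
      (a * c + b * d + s₁ ^ 2 * (p * r) + s₂ ^ 2 * (q * s)) * e3 +
      s₁ ^ 2 * s₂ ^ 2 * (r ^ 2 + s ^ 2) * hpq + s₁ ^ 2 * s₂ ^ 2 * hrs -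
      s₁ ^ 2 * s₂ ^ 2 * (p * r + q * s) * hortho
  have hs₁0 : 0 ≤ s₁ := Real.sin_nonneg_of_nonneg_of_le_pi hθ₁0
    (by linarith [Real.pi_pos, hθ12, hθ₂])
  have hs₂0 : 0 ≤ s₂ := Real.sin_nonneg_of_nonneg_of_le_pi (by linarith)
    (by linarith [Real.pi_pos])
  have : |a * d - c * b| = |s₁ * s₂| := by
    rw [← Real.sqrt_sq_eq_abs, ← Real.sqrt_sq_eq_abs, hsq]
  rw [this, abs_of_nonneg (mul_nonneg hs₁0 hs₂0)]
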